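/- (Linearisation of models) If a constraint system C_s is consistent, then C_s is satisfied by some interpretation I and assignment α in which every precedence symbol p ∈ P is interpreted as a strict total (linear) order on the universe U, i.e., p^I is irreflexive, transitive, and total (for all distinct a, b ∈ U, (a,b) ∈ p^I or (b,a) ∈ p^I). -/

import Mathlib

/-!
Feature logic with linear precedence (Manandhar, "Deterministic Consistency
Checking of LP Constraints").  `V` is the (countably infinite) set of
variables, `F` the set of relation (feature) symbols and `P` the set of
precedence symbols; using two distinct types makes `F` and `P` disjoint.
-/

/-- Atomic constraints of the feature logic with linear precedence. -/
inductive Constraint (V F P : Type) : Type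
  | eq       : V → V → Constraint V F P              -- x = y
  | feat     : V → F → V → Constraint V F P          -- x = f:y
  | mem      : V → F → V → Constraint V F P          -- x = ∃f:y
  | subset   : V → F → F → V → Constraint V F P      -- x = f:⊇g(y)
  | precPlus : V → P → V → Constraint V F P          -- x = ∃p⁺:y
  | precStar : V → P → V → Constraint V F P          -- x = ∃p*:y
  | domPlus  : F → V → P → F → V → Constraint V F P  -- f(x):p⁺:g(y)
  | domStar  : F → V → P → F → V → Constraint V F P  -- f(x):p*:g(y)

/-- Satisfaction of an atomic constraint by relations `fI`, `pI` on a
universe `U` and an assignment `α : V → U`. -/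
def Sat {V F P U : Type} (fI : F → U → U → Prop) (pI : P → U → U → Prop)
    (α : V → U) : Constraint V F P → Prop
  | .eq x y => α x = α y
  | .feat x f y => ∀ e, fI f (α x) e ↔ e = α y
  | .mem x f y => fI f (α x) (α y)
  | .subset x f g y => ∀ e, fI g (α y) e → fI f (α x) e
  | .precPlus x p y => Relation.TransGen (pI p) (α x) (α y)
  | .precStar x p y => Relation.ReflTransGen (pI p) (α x) (α y)
  | .domPlus f x p g y => ∀ e₁ e₂, fI f (α x) e₁ → fI g (α y) e₂ →
      Relation.TransGen (pI p) e₁ e₂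
  | .domStar f x p g y => ∀ e₁ e₂, fI f (α x) e₁ → fI g (α y) e₂ →
      Relation.ReflTransGen (pI p) e₁ e₂

/-- Satisfaction of a whole constraint system. -/
def SatSet {V F P U : Type} (fI : F → U → U → Prop) (pI : P → U → U → Prop)
    (α : V → U) (Cs : Set (Constraint V F P)) : Prop :=
  ∀ c ∈ Cs, Sat fI pI α c

/-- An interpretation: a nonempty universe, a binary relation for every
symbol in `F` and in `P`, such that the transitive closure of each
precedence relation is irreflexive. -/
structure Interp (F P : Type) : Type 1 where
  U : Type
  nonempty : Nonempty U
  fI : F → U → U → Prop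
  pI : P → U → U → Prop
  irrefl : ∀ (p : P) (a : U), ¬ Relation.TransGen (pI p) a a

/-- A constraint system contains a clash if it contains `x = ∃p⁺:x`;
it is clash-free otherwise. -/
def ClashFree {V F P : Type} (Cs : Set (Constraint V F P)) : Prop :=
  ∀ (x : V) (p : P), Constraint.precPlus x p x ∉ Cs

/-- **Linearisation of models.**  Every consistent constraint system is
satisfied by some interpretation in which every precedence symbol is
interpreted as a strict total (linear) order on the universe. -/
theorem linearisation_of_models
    {V F P : Type} [Countable V] [Infinite V]
    (Cs : Set (Constraint V F P)) (hfin : Cs.Finite)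
    (hcons : ∃ (I : Interp F P) (α : V → I.U), SatSet I.fI I.pI α Cs) :
    ∃ (I : Interp F P) (α : V → I.U),
      SatSet I.fI I.pI α Cs ∧
      ∀ p : P,
        (∀ a : I.U, ¬ I.pI p a a) ∧
        (∀ a b c : I.U, I.pI p a b → I.pI p b c → I.pI p a c) ∧
        (∀ a b : I.U, a ≠ b → I.pI p a b ∨ I.pI p b a) := by
  obtain ⟨I, α, hsat⟩ := hcons
  have key : ∀ p : P, ∃ s : I.U → I.U → Prop,
      (∀ a b, I.pI p a b → s a b) ∧
      (∀ a, ¬ s a a) ∧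
      (∀ a b c, s a b → s b c → s a c) ∧
      (∀ a b, a ≠ b → s a b ∨ s b a) := by
    intro p
    set r : I.U → I.U → Prop :=
      fun a b => Relation.TransGen (I.pI p) a b ∨ a = b with hr
    haveI : IsPartialOrder I.U r :=
      { refl := fun a => Or.inr rfl
        trans := fun a b c hab hbc => by
          rcases hab with h | rfl
          · rcases hbc with h' | rfl
            · exact Or.inl (h.trans h')
            · exact Or.inl h
          · exact hbc
        antisymm := fun a b hab hba => by
          rcases hab with h | rfl
          · rcases hba with h' | rfl
            · exact absurd (h.trans h') (I.irrefl p a)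
            · rfl
          · rfl }
    obtain ⟨s, hlin, hle⟩ := extend_partialOrder r
    haveI := hlin
    refine ⟨fun a b => s a b ∧ a ≠ b, ?_, ?_, ?_, ?_⟩
    · intro a b h
      refine ⟨hle _ _ (Or.inl (Relation.TransGen.single h)), ?_⟩
      rintro rfl; exact I.irrefl p a (Relation.TransGen.single h)
    · rintro a ⟨_, h⟩; exact h rfl
    · rintro a b c ⟨hab, hne1⟩ ⟨hbc, hne2⟩
      refine ⟨Trans.trans hab hbc, ?_⟩
      rintro rfl
      exact hne1 (antisymm hab hbc)
    · intro a b hne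
      rcases total_of s a b with h | h
      · exact Or.inl ⟨h, hne⟩
      · exact Or.inr ⟨h, hne.symm⟩
  choose s hmono hirr htrans htot using key
  refine ⟨⟨I.U, I.nonempty, I.fI, s, ?_⟩, α, ?_, ?_⟩
  · intro p a h
    have collapse : ∀ a b, Relation.TransGen (s p) a b → s p a b := by
      intro a b h
      induction h with
      | single h => exact h
      | tail _ h ih => exact htrans p _ _ _ ih h
    exact hirr p a (collapse a a h)
  · intro c hc
    have h := hsat c hc
    cases c with
    | eq x y => exact h
    | feat x f y => exact h
    | mem x f y => exact h
    | subset x f g y => exact h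
    | precPlus x p y => exact Relation.TransGen.mono (hmono p) _ _ h
    | precStar x p y => exact Relation.ReflTransGen.mono (hmono p) _ _ h
    | domPlus f x p g y =>
        intro e1 e2 h1 h2; exact Relation.TransGen.mono (hmono p) _ _ (h e1 e2 h1 h2)
    | domStar f x p g y =>
        intro e1 e2 h1 h2
        exact Relation.ReflTransGen.mono (hmono p) _ _ (h e1 e2 h1 h2)
  · intro p; exact ⟨hirr p, htrans p, htot p⟩
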